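/- arXiv:1312.5967 — 2 statements merged into one kernel-verified Lean document; each statement's English description precedes it below -/
import Mathlib

section
/- Under the exponential-normal convolution model P = S + B with S ~ Exp(θ) and B ~ N(μ, σ²) independent, the conditional density of S given P = p, restricted to 0 < s < p, is f(s|p) = φ_σ(s - μ_{S.P}) / (Φ(μ_{S.P}/σ) + Φ((p - μ_{S.P})/σ) - 1), where μ_{S.P} = p - μ - σ²θ, φ_σ is the N(0,σ²) density, and Φ is the standard normal CDF. -/
open MeasureTheory

/-- The standard normal cumulative distribution function `Φ`. -/
noncomputable def stdNormalCDF (x : ℝ) : ℝ :=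
  ∫ t in Set.Iic x, Real.exp (-t ^ 2 / 2) / Real.sqrt (2 * Real.pi)

/-- The centered normal density with standard deviation `σ`, `φ_σ`. -/
noncomputable def normalPDF (σ x : ℝ) : ℝ :=
  Real.exp (-x ^ 2 / (2 * σ ^ 2)) / (σ * Real.sqrt (2 * Real.pi))

lemma g_integrable : Integrable (fun t : ℝ => Real.exp (-t ^ 2 / 2) / Real.sqrt (2 * Real.pi)) := by
  have h := (integrable_exp_neg_mul_sq (b := (1:ℝ)/2) (by norm_num)).div_const
      (Real.sqrt (2 * Real.pi))
  have e : (fun t : ℝ => Real.exp (-t ^ 2 / 2) / Real.sqrt (2 * Real.pi))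
      = fun x : ℝ => Real.exp (-(1/2:ℝ) * x ^ 2) / Real.sqrt (2 * Real.pi) := by
    funext t; rw [show -t ^ 2 / 2 = -(1/2:ℝ) * t ^ 2 by ring]
  rw [e]; exact h

lemma g_total : ∫ t : ℝ, Real.exp (-t ^ 2 / 2) / Real.sqrt (2 * Real.pi) = 1 := by
  have e : ∀ t : ℝ, -(1/2 : ℝ) * t ^ 2 = -t ^ 2 / 2 := by intro t; ring
  have h := integral_gaussian (1/2 : ℝ)
  simp only [e] at h
  rw [integral_div, h]
  rw [show Real.pi / (1/2) = 2 * Real.pi by ring]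
  exact div_self (Real.sqrt_ne_zero'.mpr (by positivity))

lemma cdf_neg (x : ℝ) : stdNormalCDF (-x) = 1 - stdNormalCDF x := by
  set g : ℝ → ℝ := fun t => Real.exp (-t ^ 2 / 2) / Real.sqrt (2 * Real.pi) with hg
  have hgeven : ∀ t : ℝ, g (-t) = g t := by intro t; simp [hg]
  have h1 : ∫ t in Set.Iic x, g (-t) = ∫ t in Set.Ioi (-x), g t :=
    integral_comp_neg_Iic x g
  simp only [hgeven] at h1
  have h2 : (∫ t in Set.Iic (-x), g t) + ∫ t in Set.Ioi (-x), g t = ∫ t : ℝ, g t :=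
    intervalIntegral.integral_Iic_add_Ioi g_integrable.integrableOn g_integrable.integrableOn
  rw [g_total] at h2
  unfold stdNormalCDF
  show (∫ t in Set.Iic (-x), g t) = 1 - ∫ t in Set.Iic x, g t
  linarith

lemma integral_normalPDF (σ m a b : ℝ) (hσ : 0 < σ) :
    ∫ t in a..b, normalPDF σ (t - m)
      = stdNormalCDF ((b - m) / σ) - stdNormalCDF ((a - m) / σ) := by
  set g : ℝ → ℝ := fun t => Real.exp (-t ^ 2 / 2) / Real.sqrt (2 * Real.pi) with hg
  have hpdf : ∀ x : ℝ, normalPDF σ x = g (x / σ) / σ := by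
    intro x
    simp only [hg, normalPDF]
    rw [show -(x / σ) ^ 2 / 2 = -x ^ 2 / (2 * σ ^ 2) by rw [div_pow]; ring,
      div_div, mul_comm σ]
  simp only [hpdf]
  rw [intervalIntegral.integral_div]
  rw [intervalIntegral.integral_comp_sub_right (fun y => g (y / σ)) m,
    intervalIntegral.integral_comp_div (fun y => g y) hσ.ne']
  rw [smul_eq_mul, mul_comm, mul_div_assoc, div_self hσ.ne', mul_one]
  rw [← intervalIntegral.integral_Iic_sub_Iic g_integrable.integrableOn
    g_integrable.integrableOn]
  rfl

/-- Under the exponential-normal convolution model (with the noise truncated to `(0, p)`),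
the conditional density of `S` given `P = p` on `0 < s < p` is
`φ_σ(s - μ_{S.P}) / (Φ(μ_{S.P}/σ) + Φ((p - μ_{S.P})/σ) - 1)` with `μ_{S.P} = p - μ - σ²θ`. -/
theorem conditional_density_exp_normal
    (θ μ σ p s m : ℝ) (hθ : 0 < θ) (hσ : 0 < σ) (hs : 0 < s) (hsp : s < p)
    (hm : m = p - μ - σ ^ 2 * θ) :
    (θ * Real.exp (-θ * s) * normalPDF σ (p - s - μ)) /
      (∫ t in (0:ℝ)..p, θ * Real.exp (-θ * t) * normalPDF σ (p - t - μ))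
    = normalPDF σ (s - m) / (stdNormalCDF (m / σ) + stdNormalCDF ((p - m) / σ) - 1) := by
  subst hm
  set m : ℝ := p - μ - σ ^ 2 * θ with hm
  set C : ℝ := θ * Real.exp (σ ^ 2 * θ ^ 2 / 2 - θ * (p - μ)) with hC
  have hCpos : 0 < C := by positivity
  have key : ∀ t : ℝ, θ * Real.exp (-θ * t) * normalPDF σ (p - t - μ)
      = C * normalPDF σ (t - m) := by
    intro t
    have hexp : Real.exp (-θ * t) * Real.exp (-(p - t - μ) ^ 2 / (2 * σ ^ 2))
        = Real.exp (σ ^ 2 * θ ^ 2 / 2 - θ * (p - μ)) *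
            Real.exp (-(t - m) ^ 2 / (2 * σ ^ 2)) := by
      rw [← Real.exp_add, ← Real.exp_add]
      congr 1
      rw [hm]
      field_simp
      ring
    simp only [normalPDF, hC]
    rw [show θ * Real.exp (-θ * t) * (Real.exp (-(p - t - μ) ^ 2 / (2 * σ ^ 2)) /
        (σ * Real.sqrt (2 * Real.pi)))
      = θ * ((Real.exp (-θ * t) * Real.exp (-(p - t - μ) ^ 2 / (2 * σ ^ 2))) /
        (σ * Real.sqrt (2 * Real.pi))) from by ring, hexp]
    ring
  simp only [key]
  rw [intervalIntegral.integral_const_mul, mul_div_mul_left _ _ hCpos.ne']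
  rw [integral_normalPDF σ m 0 p hσ]
  rw [show (0 - m) / σ = -(m / σ) by ring, cdf_neg]
  ring_nf
end

section
/- Pointwise limit of GB2 to gamma: for fixed x > 0, a = 1, u > 0 and scale β > 0, setting d = βv, the generalized beta of the second kind density |1| x^{u−1}/(d^{u} B(u,v)(1 + x/d)^{u+v}) converges, as v → ∞, to the gamma density x^{u−1} e^{−x/β}/(β^u Γ(u)). -/
open MeasureTheory Filter

/-- The Euler beta function. -/
noncomputable def rBeta (x y : ℝ) : ℝ := Real.Gamma x * Real.Gamma y / Real.Gamma (x + y)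

-- log-convexity consequence
lemma gamma_combo_le (p q : ℝ) {a b : ℝ} (ha : 0 < a) (hb : 0 < b) (hp : 0 ≤ p) (hq : 0 ≤ q)
    (hpq : p + q = 1) :
    Real.Gamma (p * a + q * b) ≤ Real.Gamma a ^ p * Real.Gamma b ^ q := by
  have h := Real.convexOn_log_Gamma.2 (Set.mem_Ioi.mpr ha) (Set.mem_Ioi.mpr hb) hp hq hpq
  simp only [Function.comp, smul_eq_mul] at h
  have hab : 0 < p * a + q * b := by
    rcases eq_or_lt_of_le hp with h0 | hp'
    · have : q = 1 := by linarith
      simp [← h0, this, hb]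
    · nlinarith [mul_nonneg hq hb.le]
  have hg : 0 < Real.Gamma (p * a + q * b) := Real.Gamma_pos_of_pos hab
  calc Real.Gamma (p * a + q * b) = Real.exp (Real.log (Real.Gamma (p * a + q * b))) :=
        (Real.exp_log hg).symm
    _ ≤ Real.exp (p * Real.log (Real.Gamma a) + q * Real.log (Real.Gamma b)) := by
        exact Real.exp_le_exp.mpr h
    _ = Real.Gamma a ^ p * Real.Gamma b ^ q := by
        rw [Real.exp_add, Real.rpow_def_of_pos (Real.Gamma_pos_of_pos ha),
          Real.rpow_def_of_pos (Real.Gamma_pos_of_pos hb), mul_comm p, mul_comm q]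

lemma wendel_base {u : ℝ} (hu : 0 < u) (hu1 : u ≤ 1) :
    Tendsto (fun v : ℝ => Real.Gamma (v + u) / (v ^ u * Real.Gamma v)) atTop (nhds 1) := by
  have hlow : ∀ᶠ v : ℝ in atTop, (v / (v + u)) ^ (1 - u) ≤
      Real.Gamma (v + u) / (v ^ u * Real.Gamma v) := by
    filter_upwards [eventually_gt_atTop 0] with v hv
    have hvu : 0 < v + u := by linarith
    have hΓv : 0 < Real.Gamma v := Real.Gamma_pos_of_pos hv
    have hΓvu : 0 < Real.Gamma (v + u) := Real.Gamma_pos_of_pos hvu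
    -- Γ(v+1) ≤ Γ(v+u)^u * Γ(v+u+1)^{1-u}
    have key : Real.Gamma (v + 1) ≤ Real.Gamma (v + u) ^ u * Real.Gamma (v + u + 1) ^ (1 - u) := by
      have := gamma_combo_le u (1-u) hvu (by linarith : (0:ℝ) < v + u + 1) hu.le (by linarith) (by ring)
      have heq : u * (v + u) + (1 - u) * (v + u + 1) = v + 1 := by ring
      rwa [heq] at this
    rw [Real.Gamma_add_one hv.ne', Real.Gamma_add_one hvu.ne'] at key
    have key2 : v * Real.Gamma v ≤ Real.Gamma (v + u) * (v + u) ^ (1 - u) := by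
      calc v * Real.Gamma v ≤ Real.Gamma (v + u) ^ u * ((v + u) * Real.Gamma (v + u)) ^ (1 - u) := key
        _ = Real.Gamma (v + u) * (v + u) ^ (1 - u) := by
            rw [Real.mul_rpow hvu.le hΓvu.le]
            rw [show Real.Gamma (v+u) ^ u * ((v+u) ^ (1-u) * Real.Gamma (v+u) ^ (1-u)) =
              (Real.Gamma (v+u) ^ u * Real.Gamma (v+u) ^ (1-u)) * (v+u) ^ (1-u) by ring,
              ← Real.rpow_add hΓvu]
            norm_num
    rw [Real.div_rpow hv.le hvu.le, div_le_div_iff₀ (Real.rpow_pos_of_pos hvu _)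
      (by positivity)]
    calc v ^ (1 - u) * (v ^ u * Real.Gamma v) = (v * Real.Gamma v) := by
          rw [← mul_assoc, ← Real.rpow_add hv]; norm_num
      _ ≤ Real.Gamma (v + u) * (v + u) ^ (1 - u) := key2
  have hupp : ∀ᶠ v : ℝ in atTop, Real.Gamma (v + u) / (v ^ u * Real.Gamma v) ≤ 1 := by
    filter_upwards [eventually_gt_atTop 0] with v hv
    have hΓv : 0 < Real.Gamma v := Real.Gamma_pos_of_pos hv
    have key : Real.Gamma (v + u) ≤ Real.Gamma v ^ (1 - u) * Real.Gamma (v + 1) ^ u := by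
      have := gamma_combo_le (1-u) u hv (by linarith : (0:ℝ) < v + 1) (by linarith) hu.le (by ring)
      have heq : (1 - u) * v + u * (v + 1) = v + u := by ring
      rwa [heq] at this
    rw [Real.Gamma_add_one hv.ne', Real.mul_rpow hv.le hΓv.le, ← mul_assoc, mul_comm _ (v ^ u),
      mul_assoc, ← Real.rpow_add hΓv] at key
    norm_num at key
    rw [div_le_one (by positivity)]
    linarith [key]
  have hlim : Tendsto (fun v : ℝ => (v / (v + u)) ^ (1 - u)) atTop (nhds 1) := by
    have h1 : Tendsto (fun v : ℝ => v / (v + u)) atTop (nhds 1) := by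
      have : (fun v : ℝ => v / (v + u)) =ᶠ[atTop] fun v => 1 - u / (v + u) := by
        filter_upwards [eventually_gt_atTop 0] with v hv
        field_simp
        ring
      rw [tendsto_congr' this]
      have : Tendsto (fun v : ℝ => u / (v + u)) atTop (nhds 0) :=
        (tendsto_atTop_add_const_right _ u tendsto_id).const_div_atTop u
      simpa using (tendsto_const_nhds (x := (1:ℝ))).sub this
    have := (h1.rpow_const (Or.inr (by linarith : (0:ℝ) ≤ 1 - u)))
    simpa using this
  exact tendsto_of_tendsto_of_tendsto_of_le_of_le' hlim tendsto_const_nhds hlow hupp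

lemma wendel_aux (n : ℕ) : ∀ u : ℝ, 0 < u → u ≤ n →
    Tendsto (fun v : ℝ => Real.Gamma (v + u) / (v ^ u * Real.Gamma v)) atTop (nhds 1) := by
  induction n with
  | zero => intro u hu hun; exact absurd (hu.trans_le hun) (by norm_num)
  | succ n ih =>
    intro u hu hun
    by_cases h1 : u ≤ 1
    · exact wendel_base hu h1
    push_neg at h1
    have hu' : 0 < u - 1 := by linarith
    have hun' : u - 1 ≤ n := by push_cast at hun ⊢; linarith
    have ihu := ih (u - 1) hu' hun'
    have hmul : Tendsto (fun v : ℝ => (1 + (u - 1) / v) *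
        (Real.Gamma (v + (u - 1)) / (v ^ (u - 1) * Real.Gamma v))) atTop (nhds 1) := by
      have h0 : Tendsto (fun v : ℝ => 1 + (u - 1) / v) atTop (nhds 1) := by
        simpa using (tendsto_const_nhds (x := (1:ℝ))).add (tendsto_id.const_div_atTop (u-1))
      simpa using h0.mul ihu
    refine hmul.congr' ?_
    filter_upwards [eventually_gt_atTop 0] with v hv
    have hvu : 0 < v + (u - 1) := by linarith
    have hΓv : 0 < Real.Gamma v := Real.Gamma_pos_of_pos hv
    have hre : Real.Gamma (v + u) = (v + (u - 1)) * Real.Gamma (v + (u - 1)) := by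
      rw [show v + u = v + (u - 1) + 1 by ring, Real.Gamma_add_one hvu.ne']
    have hpow : v ^ u = v ^ (u - 1) * v := by
      rw [← Real.rpow_add_one hv.ne' (u - 1)]; norm_num
    have h1v : (1 : ℝ) + (u - 1) / v = (v + (u - 1)) / v := by field_simp
    rw [hre, hpow, h1v]
    field_simp

lemma wendel {u : ℝ} (hu : 0 < u) :
    Tendsto (fun v : ℝ => Real.Gamma (v + u) / (v ^ u * Real.Gamma v)) atTop (nhds 1) :=
  wendel_aux ⌈u⌉₊ u hu (Nat.le_ceil u)

/-- Pointwise limit of the GB2 density (with `a = 1`, `d = βv`) to the gamma density as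
`v → ∞`: `x^{u−1}/((βv)^u B(u,v)(1 + x/(βv))^{u+v}) → x^{u−1} e^{−x/β}/(β^u Γ(u))`. -/
theorem gb2_tendsto_gamma (x β u : ℝ) (hx : 0 < x) (hβ : 0 < β) (hu : 0 < u) :
    Tendsto (fun v : ℝ =>
        x ^ (u - 1) / ((β * v) ^ u * rBeta u v * (1 + x / (β * v)) ^ (u + v)))
      atTop
      (nhds (x ^ (u - 1) * Real.exp (-x / β) / (β ^ u * Real.Gamma u))) := by
  have hbase : Tendsto (fun v : ℝ => 1 + x / (β * v)) atTop (nhds 1) := by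
    have h0 : Tendsto (fun v : ℝ => x / (β * v)) atTop (nhds 0) := by
      have : Tendsto (fun v : ℝ => β * v) atTop atTop :=
        tendsto_id.const_mul_atTop hβ
      exact this.const_div_atTop x
    simpa using (tendsto_const_nhds (x := (1:ℝ))).add h0
  have hE : Tendsto (fun v : ℝ => (1 + x / (β * v)) ^ (u + v)) atTop
      (nhds (Real.exp (x / β))) := by
    have h1 : Tendsto (fun v : ℝ => (1 + x / (β * v)) ^ u) atTop (nhds 1) := by
      have := hbase.rpow_const (Or.inr hu.le)
      simpa using this
    have h2 : Tendsto (fun v : ℝ => (1 + (x / β) / v) ^ v) atTop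
        (nhds (Real.exp (x / β))) := Real.tendsto_one_add_div_rpow_exp (x / β)
    have := h1.mul h2
    rw [one_mul] at this
    refine this.congr' ?_
    filter_upwards [eventually_gt_atTop 0] with v hv
    have hb : (0:ℝ) < 1 + x / (β * v) := by positivity
    rw [div_div, Real.rpow_add hb]
  have hW := wendel hu
  have hexp : Real.exp (x / β) ≠ 0 := Real.exp_ne_zero _
  have hmain : Tendsto (fun v : ℝ =>
      x ^ (u - 1) * (Real.Gamma (v + u) / (v ^ u * Real.Gamma v)) / (β ^ u * Real.Gamma u)
        / ((1 + x / (β * v)) ^ (u + v))) atTop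
      (nhds (x ^ (u - 1) * Real.exp (-x / β) / (β ^ u * Real.Gamma u))) := by
    have := (((tendsto_const_nhds (x := x ^ (u-1))).mul hW).div_const
      (β ^ u * Real.Gamma u)).div hE hexp
    convert this using 2
    · rfl
    rw [mul_one, div_div, neg_div, Real.exp_neg]
    field_simp
    try ring
    try exact Or.inl (by ring)
    try exact Or.inl trivial
  refine hmain.congr' ?_
  filter_upwards [eventually_gt_atTop 0] with v hv
  have hΓv : 0 < Real.Gamma v := Real.Gamma_pos_of_pos hv
  have hΓu : 0 < Real.Gamma u := Real.Gamma_pos_of_pos hu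
  have hΓuv : 0 < Real.Gamma (u + v) := Real.Gamma_pos_of_pos (by linarith)
  have hb : (0:ℝ) < 1 + x / (β * v) := by positivity
  have hEpos : (0:ℝ) < (1 + x / (β * v)) ^ (u + v) := Real.rpow_pos_of_pos hb _
  have hvu : 0 < v ^ u := Real.rpow_pos_of_pos hv u
  have hβu : 0 < β ^ u := Real.rpow_pos_of_pos hβ u
  rw [rBeta, show v + u = u + v by ring, show (β * v) ^ u = β ^ u * v ^ u from
    Real.mul_rpow hβ.le hv.le]
  field_simp
  try ring
  try exact Or.inl trivial
  try exact Or.inl (by ring)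
end
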